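/- Let Φ be a 3CNF formula and let Δ'(Φ)=(D'(Φ),W'(Φ)) be the cyclic NU default theory described in the context. For every R ⊆ W'(Φ): if there exists an extension E of (D'(Φ),W'(Φ)_R) such that the letter f belongs to E, then for each literal ℓ ∈ R \ {¬l}, (D'(Φ),W'(Φ)_R) ⊭ ¬ℓ. -/

import Mathlib

/-! Propositional formulas -/

inductive Form (V : Type) : Type
  | atom : V → Form V
  | tru  : Form V
  | fals : Form V
  | neg  : Form V → Form V
  | conj : Form V → Form V → Form V
  | disj : Form V → Form V → Form V

/-- Satisfaction of a formula by a valuation. -/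
def Form.sat {V : Type} (v : V → Prop) : Form V → Prop
  | .atom a => v a
  | .tru => True
  | .fals => False
  | .neg φ => ¬ Form.sat v φ
  | .conj φ ψ => Form.sat v φ ∧ Form.sat v ψ
  | .disj φ ψ => Form.sat v φ ∨ Form.sat v ψ

/-- Logical logClosure `T*` of a set of formulas. -/
def logClosure {V : Type} (T : Set (Form V)) : Set (Form V) :=
  { φ | ∀ v : V → Prop, (∀ ψ ∈ T, Form.sat v ψ) → Form.sat v φ }

/-- A default rule `α : β₁,…,β_m / γ` (`pre = none` means the prerequisite is missing). -/
structure Default (V : Type) : Type where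
  pre   : Option (Form V)
  justs : List (Form V)
  concl : Form V

/-- The stage sets `E_i` relative to a candidate extension `E`:
`E_0 = W`, `E_{i+1} = E_i* ∪ {γ | α:β₁,…,β_m/γ ∈ D, α ∈ E_i, ¬β₁ ∉ E, …, ¬β_m ∉ E}`. -/
def extStage {V : Type} (D : Set (Default V)) (W : Set (Form V)) (E : Set (Form V)) :
    ℕ → Set (Form V)
  | 0 => W
  | i + 1 =>
      logClosure (extStage D W E i) ∪
        { φ | ∃ d ∈ D, d.concl = φ ∧ (∀ a ∈ d.pre, a ∈ extStage D W E i) ∧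
              ∀ b ∈ d.justs, Form.neg b ∉ E }

/-- `E` is an extension of the default theory `(D, W)`. -/
def IsExtension {V : Type} (D : Set (Default V)) (W : Set (Form V)) (E : Set (Form V)) : Prop :=
  E = ⋃ i, extStage D W E i

/-- `(D, W) ⊨ φ`: every extension of `(D, W)` contains `φ`. -/
def entails {V : Type} (D : Set (Default V)) (W : Set (Form V)) (φ : Form V) : Prop :=
  ∀ E, IsExtension D W E → φ ∈ E


section AuxGeneral

variable {V : Type}

lemma subset_logClosure (T : Set (Form V)) : T ⊆ logClosure T :=
  fun _ h v hv => hv _ h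

lemma logClosure_mono {T T' : Set (Form V)} (h : T ⊆ T') : logClosure T ⊆ logClosure T' :=
  fun _ hφ v hv => hφ v fun ψ hψ => hv ψ (h hψ)

lemma logClosure_idem {T : Set (Form V)} : logClosure (logClosure T) ⊆ logClosure T :=
  fun _ hφ v hv => hφ v fun ψ hψ => hψ v hv

variable {D : Set (Default V)} {W E : Set (Form V)}

lemma extStage_mono : Monotone (extStage D W E) := by
  apply monotone_nat_of_le_succ
  intro i φ h
  exact Set.mem_union_left _ (subset_logClosure _ h)

lemma stage_subset (hE : IsExtension D W E) (k : ℕ) : extStage D W E k ⊆ E := by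
  intro φ h
  rw [hE]
  exact Set.mem_iUnion.mpr ⟨k, h⟩

lemma mem_stage (hE : IsExtension D W E) {φ : Form V} (h : φ ∈ E) :
    ∃ k, φ ∈ extStage D W E k := by
  rw [hE] at h
  exact Set.mem_iUnion.mp h

lemma sat_stage {v : V → Prop} (hW : ∀ φ ∈ W, Form.sat v φ)
    (hD : ∀ d ∈ D, (∀ b ∈ d.justs, Form.neg b ∉ E) →
      (∀ a ∈ d.pre, Form.sat v a) → Form.sat v d.concl) :
    ∀ i, ∀ φ ∈ extStage D W E i, Form.sat v φ := by
  intro i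
  induction i with
  | zero => exact hW
  | succ i ih =>
    intro φ hφ
    rcases hφ with h | h
    · exact h v ih
    · obtain ⟨d, hd, rfl, hpre, hj⟩ := h
      exact hD d hd hj fun a ha => ih a (hpre a ha)

lemma negneg_mem (hE : IsExtension D W E) {φ : Form V} (h : φ ∈ E) :
    Form.neg (Form.neg φ) ∈ E := by
  obtain ⟨k, hk⟩ := mem_stage hE h
  apply stage_subset hE (k + 1)
  apply Set.mem_union_left
  intro v hv
  exact fun hn => hn (hv _ hk)

lemma not_mem_and_neg (hE : IsExtension D W E) (hW : ∃ v, ∀ φ ∈ W, Form.sat v φ)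
    (hjusts : ∀ d ∈ D, d.justs ≠ []) {φ : Form V} (h1 : φ ∈ E) (h2 : Form.neg φ ∈ E) :
    False := by
  obtain ⟨k1, hk1⟩ := mem_stage hE h1
  obtain ⟨k2, hk2⟩ := mem_stage hE h2
  have hk1' := extStage_mono (le_max_left k1 k2) hk1
  have hk2' := extStage_mono (le_max_right k1 k2) hk2
  have huniv : ∀ ψ : Form V, ψ ∈ E := by
    intro ψ
    apply stage_subset hE (max k1 k2 + 1)
    apply Set.mem_union_left
    intro v hv
    exact absurd (hv _ hk1') (hv _ hk2')
  obtain ⟨v, hv⟩ := hW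
  have hD : ∀ d ∈ D, (∀ b ∈ d.justs, Form.neg b ∉ E) →
      (∀ a ∈ d.pre, Form.sat v a) → Form.sat v d.concl := by
    intro d hd hj _
    cases hlist : d.justs with
    | nil => exact absurd hlist (hjusts d hd)
    | cons b bs =>
      exact absurd (huniv _) (hj b (by rw [hlist]; exact List.mem_cons_self (a := b) (l := bs)))
  exact (sat_stage hv hD k2 _ hk2) (sat_stage hv hD k1 _ hk1)

lemma fire (hE : IsExtension D W E) {d : Default V} (hd : d ∈ D)
    (hpre : ∀ a ∈ d.pre, a ∈ E) (hj : ∀ b ∈ d.justs, Form.neg b ∉ E) : d.concl ∈ E := by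
  obtain ⟨k, hk⟩ : ∃ k, ∀ a ∈ d.pre, a ∈ extStage D W E k := by
    cases h : d.pre with
    | none => exact ⟨0, by simp [h]⟩
    | some a =>
      obtain ⟨k, hk⟩ := mem_stage hE (hpre a (by rw [h]; rfl))
      refine ⟨k, ?_⟩
      intro b hb
      cases hb
      exact hk
  exact stage_subset hE (k + 1) (Set.mem_union_right _ ⟨d, hd, rfl, hk, hj⟩)

end AuxGeneral

/-! Literals -/

/-- A literal: a letter together with a sign (`pos = true` means a positive literal). -/
structure Lit (V : Type) : Type where
  letter : V
  pos : Bool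

/-- The formula corresponding to a literal. -/
def Lit.toForm {V : Type} (l : Lit V) : Form V :=
  if l.pos then Form.atom l.letter else Form.neg (Form.atom l.letter)

/-- Negation of a literal (so that `¬¬a = a`). -/
def Lit.negate {V : Type} (l : Lit V) : Lit V := ⟨l.letter, !l.pos⟩

/-- A set of literals is consistent if it contains no complementary pair. -/
def LitConsistent {V : Type} (S : Set (Lit V)) : Prop := ∀ l ∈ S, l.negate ∉ S

/-! Normal mixed unary (NMU) default theories -/

/-- An NMU default `α : β / β` with `α` empty or a single literal and `β` a single literal. -/
structure NMUDefault (V : Type) : Type where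
  pre : Option (Lit V)
  concl : Lit V

/-- The general default rule corresponding to an NMU default. -/
def NMUDefault.toDefault {V : Type} (d : NMUDefault V) : Default V :=
  ⟨d.pre.map Lit.toForm, [d.concl.toForm], d.concl.toForm⟩

/-- `E` is an extension of the NMU theory `(D, W)`. -/
def NMU.IsExtension {V : Type} (D : Set (NMUDefault V)) (W : Set (Lit V))
    (E : Set (Form V)) : Prop :=
  _root_.IsExtension (NMUDefault.toDefault '' D) (Lit.toForm '' W) E

/-- The NMU theory `(D, W)` entails the literal `l`. -/
def NMU.entails {V : Type} (D : Set (NMUDefault V)) (W : Set (Lit V)) (l : Lit V) : Prop :=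
  _root_.entails (NMUDefault.toDefault '' D) (Lit.toForm '' W) l.toForm

/-- An NMU theory is normal unary (NU) if every nonempty prerequisite is positive. -/
def IsNU {V : Type} (D : Set (NMUDefault V)) : Prop :=
  ∀ d ∈ D, ∀ p ∈ d.pre, p.pos = true

/-! Atomic dependency graph -/

/-- Edge `(x, y)` of the atomic dependency graph: `x` occurs in the prerequisite and `y`
in the consequent of some default of `D`. -/
def depEdge {V : Type} (D : Set (NMUDefault V)) (x y : V) : Prop :=
  ∃ d ∈ D, (∃ p ∈ d.pre, p.letter = x) ∧ d.concl.letter = y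

/-- There is a path from `x` to `y` in the atomic dependency graph. -/
def depReach {V : Type} (D : Set (NMUDefault V)) : V → V → Prop :=
  Relation.ReflTransGen (depEdge D)

/-- A set of literals `S` influences a literal `l`. -/
def influences {V : Type} (D : Set (NMUDefault V)) (S : Set (Lit V)) (l : Lit V) : Prop :=
  ∃ t ∈ S, depReach D t.letter l.letter

/-- A 3CNF formula over variables `Fin n` with `m` conjuncts is represented by the
function giving the `k`-th literal of the `j`-th clause. -/
def Sat3 {n m : ℕ} (Φ : Fin m → Fin 3 → Lit (Fin n)) : Prop :=
  ∃ τ : Fin n → Bool, ∀ j : Fin m, ∃ k : Fin 3, τ (Φ j k).letter = (Φ j k).pos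

/-- The letters of the cyclic theory `Δ'(Φ)`: the variables `xᵢ`, the fresh letters `yᵢ`,
`c_j` (`j = 1, …, m`), `f` and `l`. -/
inductive PhiVar (n m : ℕ) : Type
  | X : Fin n → PhiVar n m
  | Y : Fin n → PhiVar n m
  | C : Fin m → PhiVar n m
  | F : PhiVar n m
  | L : PhiVar n m

/-- `σ(xᵢ) = xᵢ` and `σ(¬xᵢ) = yᵢ`. -/
def sigmaMap {n m : ℕ} (t : Lit (Fin n)) : Lit (PhiVar n m) :=
  if t.pos then ⟨PhiVar.X t.letter, true⟩ else ⟨PhiVar.Y t.letter, true⟩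

/-- `D'(Φ) = D₁ ∪ D₂ ∪ D₃ ∪ D₄ ∪ D₅ ∪ D₆`, where
`D₁ = {xᵢ:¬yᵢ/¬yᵢ, :yᵢ/yᵢ}`, `D₂ = {σ(t_{j,k}):¬c_j/¬c_j}`, `D₃ = {:¬xᵢ/¬xᵢ}`,
`D₄ = {f:xᵢ/xᵢ}`, `D₅ = {c_j:f/f, f:c_j/c_j}` and `D₆ = {:l/l, l:f/f}`. -/
def DPhi' {n m : ℕ} (Φ : Fin m → Fin 3 → Lit (Fin n)) : Set (NMUDefault (PhiVar n m)) :=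
  { d | (∃ i, d = ⟨some ⟨PhiVar.X i, true⟩, ⟨PhiVar.Y i, false⟩⟩) ∨
        (∃ i, d = ⟨none, ⟨PhiVar.Y i, true⟩⟩) ∨
        (∃ j k, d = ⟨some (sigmaMap (Φ j k)), ⟨PhiVar.C j, false⟩⟩) ∨
        (∃ i, d = ⟨none, ⟨PhiVar.X i, false⟩⟩) ∨
        (∃ i, d = ⟨some ⟨PhiVar.F, true⟩, ⟨PhiVar.X i, true⟩⟩) ∨
        (∃ j, d = ⟨some ⟨PhiVar.C j, true⟩, ⟨PhiVar.F, true⟩⟩) ∨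
        (∃ j, d = ⟨some ⟨PhiVar.F, true⟩, ⟨PhiVar.C j, true⟩⟩) ∨
        d = ⟨none, ⟨PhiVar.L, true⟩⟩ ∨
        d = ⟨some ⟨PhiVar.L, true⟩, ⟨PhiVar.F, true⟩⟩ }

/-- `W'(Φ) = {x₁, …, xₙ} ∪ {¬l, c₁, …, c_m}`. -/
def WPhi' (n m : ℕ) : Set (Lit (PhiVar n m)) :=
  { l | (∃ i, l = ⟨PhiVar.X i, true⟩) ∨ l = ⟨PhiVar.L, false⟩ ∨
        ∃ j, l = ⟨PhiVar.C j, true⟩ }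


section AuxSpecific

variable {n m : ℕ}

lemma toForm_pos (a : PhiVar n m) : (Lit.toForm ⟨a, true⟩) = Form.atom a := rfl

lemma toForm_negL (a : PhiVar n m) : (Lit.toForm ⟨a, false⟩) = Form.neg (Form.atom a) := rfl

/-- The literal set generating the witness extension. -/
def Sstar (R : Set (Lit (PhiVar n m))) : Set (Lit (PhiVar n m)) :=
  { ℓ | (∃ i, ℓ = ⟨PhiVar.X i, true⟩) ∨ (∃ i, ℓ = ⟨PhiVar.Y i, true⟩) ∨
        (∃ j, ℓ = ⟨PhiVar.C j, true⟩) ∨ ℓ = ⟨PhiVar.F, true⟩ ∨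
        ((⟨PhiVar.L, false⟩ : Lit (PhiVar n m)) ∈ R ∧ ℓ = ⟨PhiVar.L, true⟩) ∨
        ((⟨PhiVar.L, false⟩ : Lit (PhiVar n m)) ∉ R ∧ ℓ = ⟨PhiVar.L, false⟩) }

/-- Canonical model for the witness extension. -/
def vstar (R : Set (Lit (PhiVar n m))) : PhiVar n m → Prop := fun a =>
  match a with
  | .L => (⟨PhiVar.L, false⟩ : Lit (PhiVar n m)) ∈ R
  | _ => True

lemma vstar_sat (R : Set (Lit (PhiVar n m))) :
    ∀ φ ∈ Lit.toForm '' Sstar R, Form.sat (vstar R) φ := by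
  rintro φ ⟨ℓ, hℓ, rfl⟩
  rcases hℓ with ⟨i, rfl⟩ | ⟨i, rfl⟩ | ⟨j, rfl⟩ | rfl | ⟨hB, rfl⟩ | ⟨hB, rfl⟩ <;>
    simp [Lit.toForm, Form.sat, vstar] <;> try exact hB

lemma sat_Estar (R : Set (Lit (PhiVar n m))) {φ : Form (PhiVar n m)}
    (h : φ ∈ logClosure (Lit.toForm '' Sstar R)) : Form.sat (vstar R) φ :=
  h _ (vstar_sat R)

lemma atom_mem_Estar {R : Set (Lit (PhiVar n m))} {a : PhiVar n m}
    (h : (⟨a, true⟩ : Lit (PhiVar n m)) ∈ Sstar R) :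
    Form.atom a ∈ logClosure (Lit.toForm '' Sstar R) :=
  subset_logClosure _ ⟨_, h, rfl⟩

lemma negneg_mem_Estar {R : Set (Lit (PhiVar n m))} {a : PhiVar n m}
    (h : (⟨a, true⟩ : Lit (PhiVar n m)) ∈ Sstar R) :
    Form.neg (Form.neg (Form.atom a)) ∈ logClosure (Lit.toForm '' Sstar R) := by
  intro v hv
  exact fun hn => hn (hv _ ⟨_, h, rfl⟩)

lemma neg_atom_not_mem_Estar {R : Set (Lit (PhiVar n m))} {a : PhiVar n m}
    (h : vstar R a) : Form.neg (Form.atom a) ∉ logClosure (Lit.toForm '' Sstar R) :=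
  fun hmem => (sat_Estar R hmem) h


lemma NMU_stage_fire {V : Type} {DP : Set (NMUDefault V)} {Wf Est : Set (Form V)}
    {d' : NMUDefault V} (hd : d' ∈ DP) {k : ℕ}
    (hpre : ∀ a ∈ d'.pre, a.toForm ∈ extStage (NMUDefault.toDefault '' DP) Wf Est k)
    (hj : Form.neg d'.concl.toForm ∉ Est) :
    d'.concl.toForm ∈ extStage (NMUDefault.toDefault '' DP) Wf Est (k + 1) := by
  apply Set.mem_union_right
  refine ⟨d'.toDefault, ⟨d', hd, rfl⟩, rfl, ?_, ?_⟩
  · intro a ha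
    cases hp : d'.pre with
    | none =>
      rw [show d'.toDefault.pre = Option.map Lit.toForm d'.pre from rfl, hp] at ha
      cases ha
    | some ℓ =>
      rw [show d'.toDefault.pre = Option.map Lit.toForm d'.pre from rfl, hp] at ha
      cases ha
      exact hpre ℓ (by rw [hp]; rfl)
  · intro b hb
    cases hb
    · exact hj
    · next hb => cases hb

lemma Estar_isExt (Φ : Fin m → Fin 3 → Lit (Fin n)) (R : Set (Lit (PhiVar n m)))
    (hAB : ((⟨PhiVar.L, false⟩ : Lit (PhiVar n m)) ∈ R) ∨
      ∃ j, (⟨PhiVar.C j, true⟩ : Lit (PhiVar n m)) ∉ R) :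
    IsExtension (NMUDefault.toDefault '' DPhi' Φ) (Lit.toForm '' (WPhi' n m \ R))
      (logClosure (Lit.toForm '' Sstar R)) := by
  set Dst : Set (Default (PhiVar n m)) := NMUDefault.toDefault '' DPhi' Φ with hDst
  set Wf : Set (Form (PhiVar n m)) := Lit.toForm '' (WPhi' n m \ R) with hWf
  set Est : Set (Form (PhiVar n m)) := logClosure (Lit.toForm '' Sstar R) with hEst
  have hX : ∀ i, (⟨PhiVar.X i, true⟩ : Lit (PhiVar n m)) ∈ Sstar R := fun i => Or.inl ⟨i, rfl⟩
  have hY : ∀ i, (⟨PhiVar.Y i, true⟩ : Lit (PhiVar n m)) ∈ Sstar R :=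
    fun i => Or.inr (Or.inl ⟨i, rfl⟩)
  have hC : ∀ j, (⟨PhiVar.C j, true⟩ : Lit (PhiVar n m)) ∈ Sstar R :=
    fun j => Or.inr (Or.inr (Or.inl ⟨j, rfl⟩))
  have hF : (⟨PhiVar.F, true⟩ : Lit (PhiVar n m)) ∈ Sstar R :=
    Or.inr (Or.inr (Or.inr (Or.inl rfl)))
  -- the stages computed relative to Est
  -- upper bound: every stage is contained in Est
  have hstages : ∀ i, extStage Dst Wf Est i ⊆ Est := by
    intro i
    induction i with
    | zero =>
      rintro φ ⟨ℓ, ⟨hℓW, hℓR⟩, rfl⟩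
      apply subset_logClosure
      rcases hℓW with ⟨i, rfl⟩ | rfl | ⟨j, rfl⟩
      · exact ⟨_, hX i, rfl⟩
      · exact ⟨_, Or.inr (Or.inr (Or.inr (Or.inr (Or.inr ⟨hℓR, rfl⟩)))), rfl⟩
      · exact ⟨_, hC j, rfl⟩
    | succ i ih =>
      intro φ hφ
      rcases hφ with h | h
      · exact logClosure_idem (logClosure_mono ih h)
      · obtain ⟨d, hd, rfl, hpre, hj⟩ := h
        obtain ⟨d', hd', rfl⟩ := hd
        have hj' : Form.neg d'.concl.toForm ∉ Est :=
          hj _ (List.mem_singleton_self _)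
        rcases hd' with ⟨i, rfl⟩ | ⟨i, rfl⟩ | ⟨j', k, rfl⟩ | ⟨i, rfl⟩ | ⟨i, rfl⟩ |
          ⟨j', rfl⟩ | ⟨j', rfl⟩ | rfl | rfl
        · exact absurd (negneg_mem_Estar (hY i)) hj'
        · exact atom_mem_Estar (hY i)
        · exact absurd (negneg_mem_Estar (hC j')) hj'
        · exact absurd (negneg_mem_Estar (hX i)) hj'
        · exact atom_mem_Estar (hX i)
        · exact atom_mem_Estar hF
        · exact atom_mem_Estar (hC j')
        · by_cases hB : (⟨PhiVar.L, false⟩ : Lit (PhiVar n m)) ∈ R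
          · exact atom_mem_Estar (Or.inr (Or.inr (Or.inr (Or.inr (Or.inl ⟨hB, rfl⟩)))))
          · have hmem : Lit.toForm (⟨PhiVar.L, false⟩ : Lit (PhiVar n m)) ∈ Est :=
              subset_logClosure (Lit.toForm '' Sstar R)
                ⟨⟨PhiVar.L, false⟩, Or.inr (Or.inr (Or.inr (Or.inr (Or.inr ⟨hB, rfl⟩)))), rfl⟩
            exact absurd hmem hj'
        · exact atom_mem_Estar hF
  -- lower bound facts
  have hd2 : ∀ i : Fin n, (⟨none, ⟨PhiVar.Y i, true⟩⟩ : NMUDefault (PhiVar n m)) ∈ DPhi' Φ :=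
    fun i => Or.inr (Or.inl ⟨i, rfl⟩)
  have hd5 : ∀ i : Fin n,
      (⟨some ⟨PhiVar.F, true⟩, ⟨PhiVar.X i, true⟩⟩ : NMUDefault (PhiVar n m)) ∈ DPhi' Φ :=
    fun i => Or.inr (Or.inr (Or.inr (Or.inr (Or.inl ⟨i, rfl⟩))))
  have hd6 : ∀ j : Fin m,
      (⟨some ⟨PhiVar.C j, true⟩, ⟨PhiVar.F, true⟩⟩ : NMUDefault (PhiVar n m)) ∈ DPhi' Φ :=
    fun j => Or.inr (Or.inr (Or.inr (Or.inr (Or.inr (Or.inl ⟨j, rfl⟩)))))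
  have hd7 : ∀ j : Fin m,
      (⟨some ⟨PhiVar.F, true⟩, ⟨PhiVar.C j, true⟩⟩ : NMUDefault (PhiVar n m)) ∈ DPhi' Φ :=
    fun j => Or.inr (Or.inr (Or.inr (Or.inr (Or.inr (Or.inr (Or.inl ⟨j, rfl⟩))))))
  have hd8 : (⟨none, ⟨PhiVar.L, true⟩⟩ : NMUDefault (PhiVar n m)) ∈ DPhi' Φ :=
    Or.inr (Or.inr (Or.inr (Or.inr (Or.inr (Or.inr (Or.inr (Or.inl rfl)))))))
  have hd9 : (⟨some ⟨PhiVar.L, true⟩, ⟨PhiVar.F, true⟩⟩ : NMUDefault (PhiVar n m)) ∈ DPhi' Φ :=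
    Or.inr (Or.inr (Or.inr (Or.inr (Or.inr (Or.inr (Or.inr (Or.inr rfl)))))))
  have hfstage : Form.atom PhiVar.F ∈ extStage Dst Wf Est 2 := by
    by_cases hB : (⟨PhiVar.L, false⟩ : Lit (PhiVar n m)) ∈ R
    · have hL1 : Form.atom PhiVar.L ∈ extStage Dst Wf Est 1 :=
        NMU_stage_fire hd8 (k := 0) (by intro a ha; cases ha)
          (neg_atom_not_mem_Estar (a := PhiVar.L) hB)
      exact NMU_stage_fire hd9 (k := 1) (by intro a ha; cases ha; exact hL1)
        (neg_atom_not_mem_Estar (a := PhiVar.F) trivial)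
    · obtain ⟨j, hj⟩ := hAB.resolve_left hB
      have hC0 : Lit.toForm (⟨PhiVar.C j, true⟩ : Lit (PhiVar n m)) ∈ extStage Dst Wf Est 0 :=
        ⟨⟨PhiVar.C j, true⟩, ⟨Or.inr (Or.inr ⟨j, rfl⟩), hj⟩, rfl⟩
      apply extStage_mono (show (1:ℕ) ≤ 2 by norm_num)
      exact NMU_stage_fire (hd6 j) (k := 0) (by intro a ha; cases ha; exact hC0)
        (neg_atom_not_mem_Estar (a := PhiVar.F) trivial)
  have hSF3 : Lit.toForm '' Sstar R ⊆ extStage Dst Wf Est 3 := by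
    rintro φ ⟨ℓ, hℓ, rfl⟩
    rcases hℓ with ⟨i, rfl⟩ | ⟨i, rfl⟩ | ⟨j, rfl⟩ | rfl | ⟨hB, rfl⟩ | ⟨hB, rfl⟩
    · exact NMU_stage_fire (hd5 i) (k := 2) (by intro a ha; cases ha; exact hfstage)
        (neg_atom_not_mem_Estar (a := PhiVar.X i) trivial)
    · apply extStage_mono (show (1:ℕ) ≤ 3 by norm_num)
      exact NMU_stage_fire (hd2 i) (k := 0) (by intro a ha; cases ha)
        (neg_atom_not_mem_Estar (a := PhiVar.Y i) trivial)
    · exact NMU_stage_fire (hd7 j) (k := 2) (by intro a ha; cases ha; exact hfstage)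
        (neg_atom_not_mem_Estar (a := PhiVar.C j) trivial)
    · exact extStage_mono (show (2:ℕ) ≤ 3 by norm_num) hfstage
    · apply extStage_mono (show (1:ℕ) ≤ 3 by norm_num)
      exact NMU_stage_fire hd8 (k := 0) (by intro a ha; cases ha)
        (neg_atom_not_mem_Estar (a := PhiVar.L) hB)
    · apply extStage_mono (show (0:ℕ) ≤ 3 by norm_num)
      exact ⟨⟨PhiVar.L, false⟩, ⟨Or.inr (Or.inl rfl), hB⟩, rfl⟩
  apply Set.Subset.antisymm
  · intro φ hφ
    have : φ ∈ extStage Dst Wf Est 4 := by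
      apply Set.mem_union_left
      exact logClosure_mono hSF3 hφ
    exact Set.mem_iUnion.mpr ⟨4, this⟩
  · intro φ hφ
    obtain ⟨k, hk⟩ := Set.mem_iUnion.mp hφ
    exact hstages k hk

end AuxSpecific

/-- For every `R ⊆ W'(Φ)`: if some extension `E` of `(D'(Φ), W'(Φ)_R)` contains the letter
`f`, then for each literal `ℓ ∈ R \ {¬l}`, `(D'(Φ), W'(Φ)_R) ⊭ ¬ℓ`. -/
theorem f_in_extension_claim {n m : ℕ} (Φ : Fin m → Fin 3 → Lit (Fin n))
    (R : Set (Lit (PhiVar n m))) (hR : R ⊆ WPhi' n m)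
    (hf : ∃ E, NMU.IsExtension (DPhi' Φ) (WPhi' n m \ R) E ∧
      Lit.toForm (⟨PhiVar.F, true⟩ : Lit (PhiVar n m)) ∈ E) :
    ∀ l ∈ R, l ≠ (⟨PhiVar.L, false⟩ : Lit (PhiVar n m)) →
      ¬ NMU.entails (DPhi' Φ) (WPhi' n m \ R) l.negate := by
  obtain ⟨E, hEext, hfE⟩ := hf
  have hEext' : IsExtension (NMUDefault.toDefault '' DPhi' Φ)
      (Lit.toForm '' (WPhi' n m \ R)) E := hEext
  have hw0 : ∀ φ ∈ Lit.toForm '' (WPhi' n m \ R),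
      Form.sat (fun a => match a with | PhiVar.L => False | _ => True) φ := by
    rintro φ ⟨ℓ, ⟨hℓW, _⟩, rfl⟩
    rcases hℓW with ⟨i, rfl⟩ | rfl | ⟨j, rfl⟩
    · exact trivial
    · exact fun h => h
    · exact trivial
  have hjusts : ∀ d ∈ NMUDefault.toDefault '' DPhi' Φ, d.justs ≠ [] := by
    rintro _ ⟨d', _, rfl⟩
    simp [NMUDefault.toDefault]
  have hcons : ∀ φ : Form (PhiVar n m), φ ∈ E → Form.neg φ ∈ E → False :=
    fun _ h1 h2 => not_mem_and_neg hEext' ⟨_, hw0⟩ hjusts h1 h2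
  have hAB : ((⟨PhiVar.L, false⟩ : Lit (PhiVar n m)) ∈ R) ∨
      ∃ j, (⟨PhiVar.C j, true⟩ : Lit (PhiVar n m)) ∉ R := by
    by_contra hCneg
    push_neg at hCneg
    obtain ⟨hB, hA⟩ := hCneg
    have dichX : ∀ i : Fin n, Form.neg (Form.atom (PhiVar.X i)) ∈ E ∨
        Form.neg (Form.neg (Form.atom (PhiVar.X i))) ∈ E := by
      intro i
      by_contra hcon
      push_neg at hcon
      obtain ⟨h1, h2⟩ := hcon
      have hcl : (NMUDefault.toDefault ⟨none, ⟨PhiVar.X i, false⟩⟩).concl ∈ E := by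
        apply fire hEext'
        · exact ⟨_, Or.inr (Or.inr (Or.inr (Or.inl ⟨i, rfl⟩))), rfl⟩
        · intro a ha; cases ha
        · intro b hb
          cases hb
          · exact h2
          · next hb => cases hb
      exact h1 hcl
    have dichY : ∀ i : Fin n, Form.neg (Form.atom (PhiVar.Y i)) ∈ E ∨
        Form.neg (Form.neg (Form.atom (PhiVar.Y i))) ∈ E := by
      intro i
      by_contra hcon
      push_neg at hcon
      obtain ⟨h1, h2⟩ := hcon
      have hcl : (NMUDefault.toDefault ⟨none, ⟨PhiVar.Y i, true⟩⟩).concl ∈ E := by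
        apply fire hEext'
        · exact ⟨_, Or.inr (Or.inl ⟨i, rfl⟩), rfl⟩
        · intro a ha; cases ha
        · intro b hb
          cases hb
          · exact h1
          · next hb => cases hb
      exact h2 (negneg_mem hEext' hcl)
    set v : PhiVar n m → Prop := fun a =>
      match a with
      | PhiVar.X i => Form.neg (Form.atom (PhiVar.X i)) ∉ E
      | PhiVar.Y i => Form.neg (Form.atom (PhiVar.Y i)) ∉ E
      | _ => False with hv
    have hW : ∀ φ ∈ Lit.toForm '' (WPhi' n m \ R), Form.sat v φ := by
      rintro φ ⟨ℓ, ⟨hℓW, hℓR⟩, rfl⟩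
      rcases hℓW with ⟨i, rfl⟩ | rfl | ⟨j, rfl⟩
      · intro hneg
        exact hcons _ (stage_subset hEext' 0 ⟨_, ⟨Or.inl ⟨i, rfl⟩, hℓR⟩, rfl⟩) hneg
      · exact fun h => h
      · exact absurd (hA j) hℓR
    have hD : ∀ d ∈ NMUDefault.toDefault '' DPhi' Φ,
        (∀ b ∈ d.justs, Form.neg b ∉ E) → (∀ a ∈ d.pre, Form.sat v a) →
        Form.sat v d.concl := by
      rintro _ ⟨d', hd', rfl⟩ hj hp
      have hj' : Form.neg d'.concl.toForm ∉ E := hj _ (List.mem_singleton_self _)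
      rcases hd' with ⟨i, rfl⟩ | ⟨i, rfl⟩ | ⟨j', k, rfl⟩ | ⟨i, rfl⟩ | ⟨i, rfl⟩ |
        ⟨j', rfl⟩ | ⟨j', rfl⟩ | rfl | rfl
      · exact fun h => h ((dichY i).resolve_right hj')
      · exact hj'
      · exact fun h => h
      · exact fun h => h ((dichX i).resolve_right hj')
      · exact absurd (hp _ rfl) (fun h => h)
      · exact absurd (hp _ rfl) (fun h => h)
      · exact absurd (hp _ rfl) (fun h => h)
      · exact absurd
          (stage_subset hEext' 0 ⟨⟨PhiVar.L, false⟩, ⟨Or.inr (Or.inl rfl), hB⟩, rfl⟩) hj'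
      · exact absurd (hp _ rfl) (fun h => h)
    obtain ⟨k, hk⟩ := mem_stage hEext' hfE
    exact (sat_stage hW hD k _ hk)
  intro l hlR hlne hent
  have hmem := hent _ (Estar_isExt Φ R hAB)
  rcases hR hlR with ⟨i, rfl⟩ | rfl | ⟨j, rfl⟩
  · exact (sat_Estar R hmem) trivial
  · exact hlne rfl
  · exact (sat_Estar R hmem) trivial
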